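/- Fix real numbers r and ϑ with 0 < r < √((√5 − 1)/2) and 0 < ϑ < 1, and define f(d) = √ϑ/(1 − r²)^{d/4} and g(d) = (r/√(1 − r²))^d · (√(1 + 2ϑ(1 − r²)^{d/2}/r^{2d}) − 1) for positive integers d. Then f(d)/g(d) → 1/√2 as d → ∞. -/

import Mathlib

open Filter

/-- **Corollary, case 3.** For fixed `0 < r < √((√5-1)/2)` and `0 < ϑ < 1`, with
`f(d) = √ϑ/(1-r²)^{d/4}` and
`g(d) = (r/√(1-r²))^d (√(1 + 2ϑ(1-r²)^{d/2}/r^{2d}) - 1)`, the quotient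
`f(d)/g(d)` tends to `1/√2` as `d → ∞`. -/
theorem bounds_quotient_tendsto_small_r
    (r ϑ : ℝ) (hr0 : 0 < r) (hr1 : r < Real.sqrt ((Real.sqrt 5 - 1) / 2))
    (hϑ0 : 0 < ϑ) (hϑ1 : ϑ < 1) :
    Tendsto (fun d : ℕ =>
        Real.sqrt ϑ / (1 - r ^ 2) ^ ((d : ℝ) / 4) /
          ((r / Real.sqrt (1 - r ^ 2)) ^ d *
            (Real.sqrt (1 + 2 * ϑ * (1 - r ^ 2) ^ ((d : ℝ) / 2) / r ^ (2 * d)) - 1)))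
      atTop (nhds (1 / Real.sqrt 2)) := by
  have hs5 : Real.sqrt 5 ^ 2 = 5 := Real.sq_sqrt (by norm_num)
  have hs5nn : 0 ≤ Real.sqrt 5 := Real.sqrt_nonneg 5
  have hs5ge : 1 ≤ Real.sqrt 5 := by nlinarith
  have hs5lt : Real.sqrt 5 < 3 := by nlinarith
  have hs0 : (0:ℝ) ≤ (Real.sqrt 5 - 1) / 2 := by linarith
  have hr2 : r ^ 2 < (Real.sqrt 5 - 1) / 2 := by
    calc r ^ 2 < (Real.sqrt ((Real.sqrt 5 - 1) / 2)) ^ 2 := by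
          exact pow_lt_pow_left₀ hr1 hr0.le (by norm_num)
      _ = (Real.sqrt 5 - 1) / 2 := Real.sq_sqrt hs0
  have hQ : 0 < 1 - r ^ 2 := by nlinarith
  have hr4 : r ^ 4 < 1 - r ^ 2 := by nlinarith [sq_nonneg r, sq_nonneg (r^2)]
  set Q : ℝ := 1 - r ^ 2 with hQdef
  set a : ℝ := r ^ 4 / Q with hadef
  have ha0 : 0 < a := div_pos (pow_pos hr0 4) hQ
  have ha1 : a < 1 := (div_lt_one hQ).mpr hr4
  -- pointwise identity
  have key : ∀ d : ℕ,
      Real.sqrt ϑ / Q ^ ((d : ℝ) / 4) /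
          ((r / Real.sqrt Q) ^ d *
            (Real.sqrt (1 + 2 * ϑ * Q ^ ((d : ℝ) / 2) / r ^ (2 * d)) - 1))
        = Real.sqrt ϑ /
            (Real.sqrt (a ^ ((d : ℝ) / 2) + 2 * ϑ) - a ^ ((d : ℝ) / 4)) := by
    intro d
    have hX : 0 < Q ^ ((d : ℝ) / 4) := Real.rpow_pos_of_pos hQ _
    have hrd : 0 < r ^ d := pow_pos hr0 d
    set X : ℝ := Q ^ ((d : ℝ) / 4) with hXdef
    have hX2 : Q ^ ((d : ℝ) / 2) = X ^ 2 := by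
      rw [hXdef, ← Real.rpow_natCast (Q ^ ((d : ℝ) / 4)) 2, ← Real.rpow_mul hQ.le]
      congr 1
      push_cast
      ring
    have hr2d : r ^ (2 * d) = (r ^ d) ^ 2 := by
      rw [pow_mul]; ring
    have hsqQ : (Real.sqrt Q) ^ d = Q ^ ((d : ℝ) / 2) := by
      rw [Real.sqrt_eq_rpow, ← Real.rpow_natCast (Q ^ ((1:ℝ)/2)) d, ← Real.rpow_mul hQ.le]
      ring_nf
    have ha4 : a ^ ((d : ℝ) / 4) = r ^ d / X := by
      rw [hadef, Real.div_rpow (by positivity) hQ.le, hXdef]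
      congr 1
      rw [← Real.rpow_natCast r 4, ← Real.rpow_mul hr0.le,
        show ((4:ℕ):ℝ) * ((d:ℝ)/4) = ((d:ℕ):ℝ) by push_cast; ring, Real.rpow_natCast]
    have ha2 : a ^ ((d : ℝ) / 2) = (r ^ d) ^ 2 / X ^ 2 := by
      have : a ^ ((d : ℝ) / 2) = (a ^ ((d : ℝ) / 4)) ^ 2 := by
        rw [← Real.rpow_natCast (a ^ ((d : ℝ) / 4)) 2, ← Real.rpow_mul ha0.le]
        congr 1
        push_cast
        ring
      rw [this, ha4, div_pow]
    set S : ℝ := Real.sqrt (a ^ ((d : ℝ) / 2) + 2 * ϑ) with hSdef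
    have hsqrt : Real.sqrt (1 + 2 * ϑ * Q ^ ((d : ℝ) / 2) / r ^ (2 * d))
        = X / r ^ d * S := by
      have h1 : 1 + 2 * ϑ * Q ^ ((d : ℝ) / 2) / r ^ (2 * d)
          = (X / r ^ d) ^ 2 * (a ^ ((d : ℝ) / 2) + 2 * ϑ) := by
        rw [ha2, hX2, hr2d]
        field_simp
      rw [h1, Real.sqrt_mul (sq_nonneg _), Real.sqrt_sq (by positivity), hSdef]
    have hdiv : (r / Real.sqrt Q) ^ d = r ^ d / X ^ 2 := by
      rw [div_pow, hsqQ, hX2]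
    rw [hsqrt, hdiv, ha4, div_div]
    congr 1
    field_simp
  -- limits
  have haq : (0:ℝ) ≤ a ^ ((1:ℝ)/4) := (Real.rpow_pos_of_pos ha0 _).le
  have haq1 : a ^ ((1:ℝ)/4) < 1 := Real.rpow_lt_one ha0.le ha1 (by norm_num)
  have haq2 : (0:ℝ) ≤ a ^ ((1:ℝ)/2) := (Real.rpow_pos_of_pos ha0 _).le
  have haq21 : a ^ ((1:ℝ)/2) < 1 := Real.rpow_lt_one ha0.le ha1 (by norm_num)
  have hlim4 : Tendsto (fun d : ℕ => a ^ ((d : ℝ) / 4)) atTop (nhds 0) := by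
    have heq : ∀ d : ℕ, a ^ ((d : ℝ) / 4) = (a ^ ((1:ℝ)/4)) ^ d := by
      intro d
      rw [← Real.rpow_natCast (a ^ ((1:ℝ)/4)) d, ← Real.rpow_mul ha0.le]
      ring_nf
    simp only [heq]
    exact tendsto_pow_atTop_nhds_zero_of_lt_one haq haq1
  have hlim2 : Tendsto (fun d : ℕ => a ^ ((d : ℝ) / 2)) atTop (nhds 0) := by
    have heq : ∀ d : ℕ, a ^ ((d : ℝ) / 2) = (a ^ ((1:ℝ)/2)) ^ d := by
      intro d
      rw [← Real.rpow_natCast (a ^ ((1:ℝ)/2)) d, ← Real.rpow_mul ha0.le]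
      ring_nf
    simp only [heq]
    exact tendsto_pow_atTop_nhds_zero_of_lt_one haq2 haq21
  have hden : Tendsto (fun d : ℕ =>
      Real.sqrt (a ^ ((d : ℝ) / 2) + 2 * ϑ) - a ^ ((d : ℝ) / 4)) atTop
      (nhds (Real.sqrt (2 * ϑ))) := by
    have h1 : Tendsto (fun d : ℕ => a ^ ((d : ℝ) / 2) + 2 * ϑ) atTop (nhds (0 + 2 * ϑ)) :=
      hlim2.add_const _
    have h2 : Tendsto (fun d : ℕ => Real.sqrt (a ^ ((d : ℝ) / 2) + 2 * ϑ)) atTop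
        (nhds (Real.sqrt (0 + 2 * ϑ))) :=
      (Real.continuous_sqrt.continuousAt).tendsto.comp h1
    have h3 := h2.sub hlim4
    simpa using h3
  have hne : Real.sqrt (2 * ϑ) ≠ 0 :=
    (Real.sqrt_pos.mpr (by linarith)).ne'
  have hfinal : Tendsto (fun d : ℕ => Real.sqrt ϑ /
      (Real.sqrt (a ^ ((d : ℝ) / 2) + 2 * ϑ) - a ^ ((d : ℝ) / 4))) atTop
      (nhds (Real.sqrt ϑ / Real.sqrt (2 * ϑ))) :=
    tendsto_const_nhds.div hden hne
  have hval : Real.sqrt ϑ / Real.sqrt (2 * ϑ) = 1 / Real.sqrt 2 := by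
    rw [Real.sqrt_mul (by norm_num : (0:ℝ) ≤ 2), mul_comm, ← div_div,
      div_self (Real.sqrt_pos.mpr hϑ0).ne']
  rw [← hval]
  exact hfinal.congr fun d => (key d).symm
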